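/- Given n items with weights w : Fin n → ℕ and m bins of capacity W with ∑ᵢ wᵢ = m·W, there is an assignment g : Fin n → Fin m with ∑_{i : g(i)=j} wᵢ ≤ W for all j if and only if there is an assignment g with ∑_{i : g(i)=j} wᵢ = W for all j, which in turn holds if and only if the total cost ∑ᵢ wᵢ − (number of bins j with ∑_{i : g(i)=j} wᵢ ≥ W) is at most m·(W−1) for some assignment g (assuming W ≥ 1). -/
import Mathlib


/-- Bin-packing / shopping equivalence: with `∑ i, w i = m * W` and `W ≥ 1`,
an assignment with all bin loads `≤ W` exists iff one with all loads `= W`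
exists, iff some assignment has shopping cost at most `m * (W - 1)`,
where the cost is total weight minus the number of shops whose load
reaches `W` (each gives a discount of 1). -/
theorem stmt_1 (n m W : ℕ) (w : Fin n → ℕ) (hW : 1 ≤ W)
    (hsum : ∑ i, w i = m * W) :
    ((∃ g : Fin n → Fin m,
        ∀ j, ∑ i ∈ Finset.univ.filter (fun i => g i = j), w i ≤ W) ↔
      (∃ g : Fin n → Fin m,
        ∀ j, ∑ i ∈ Finset.univ.filter (fun i => g i = j), w i = W)) ∧
    ((∃ g : Fin n → Fin m,
        ∀ j, ∑ i ∈ Finset.univ.filter (fun i => g i = j), w i = W) ↔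
      (∃ g : Fin n → Fin m,
        ((∑ i, w i : ℤ) -
            ((Finset.univ.filter
              (fun j => W ≤ ∑ i ∈ Finset.univ.filter (fun i => g i = j), w i)).card : ℤ))
          ≤ (m : ℤ) * ((W : ℤ) - 1))) := by
  have key : ∀ g : Fin n → Fin m,
      ∑ j, ∑ i ∈ Finset.univ.filter (fun i => g i = j), w i = m * W := by
    intro g
    rw [Finset.sum_fiberwise]
    exact hsum
  have forceLe : ∀ (L : Fin m → ℕ), (∑ j, L j = m * W) → (∀ j, L j ≤ W) → ∀ j, L j = W := by
    intro L hs hle j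
    by_contra h
    have hlt : L j < W := lt_of_le_of_ne (hle j) h
    have : ∑ j, L j < ∑ _j : Fin m, W :=
      Finset.sum_lt_sum (fun i _ => hle i) ⟨j, Finset.mem_univ j, hlt⟩
    rw [hs, Finset.sum_const, Finset.card_univ, Fintype.card_fin, smul_eq_mul] at this
    exact lt_irrefl _ this
  have forceGe : ∀ (L : Fin m → ℕ), (∑ j, L j = m * W) → (∀ j, W ≤ L j) → ∀ j, L j = W := by
    intro L hs hge j
    by_contra h
    have hlt : W < L j := lt_of_le_of_ne (hge j) (Ne.symm h)
    have : ∑ _j : Fin m, W < ∑ j, L j :=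
      Finset.sum_lt_sum (fun i _ => hge i) ⟨j, Finset.mem_univ j, hlt⟩
    rw [hs, Finset.sum_const, Finset.card_univ, Fintype.card_fin, smul_eq_mul] at this
    exact lt_irrefl _ this
  constructor
  · constructor
    · rintro ⟨g, hg⟩
      exact ⟨g, forceLe _ (key g) hg⟩
    · rintro ⟨g, hg⟩
      exact ⟨g, fun j => (hg j).le⟩
  · constructor
    · rintro ⟨g, hg⟩
      refine ⟨g, ?_⟩
      have hcard : (Finset.univ.filter
          (fun j => W ≤ ∑ i ∈ Finset.univ.filter (fun i => g i = j), w i)).card = m := by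
        rw [Finset.filter_true_of_mem (fun j _ => (hg j).ge), Finset.card_univ, Fintype.card_fin]
      have hs' : (∑ i, (w i : ℤ)) = (m : ℤ) * W := by exact_mod_cast hsum
      rw [hcard, hs']
      ring_nf
      exact le_refl _
    · rintro ⟨g, hg⟩
      refine ⟨g, ?_⟩
      set S := Finset.univ.filter
        (fun j => W ≤ ∑ i ∈ Finset.univ.filter (fun i => g i = j), w i) with hS
      have hcardle : S.card ≤ m := by
        calc S.card ≤ Finset.univ.card := Finset.card_filter_le _ _
        _ = m := by simp
      have hmle : (m : ℤ) ≤ S.card := by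
        have hs' : (∑ i, (w i : ℤ)) = (m : ℤ) * W := by exact_mod_cast hsum
        rw [hs'] at hg
        nlinarith
      have hSm : S.card = m := le_antisymm hcardle (by exact_mod_cast hmle)
      have hall : ∀ j, W ≤ ∑ i ∈ Finset.univ.filter (fun i => g i = j), w i := by
        have : S = Finset.univ := Finset.eq_univ_of_card S (by simp [hSm])
        intro j
        have := Finset.mem_filter.mp (this ▸ Finset.mem_univ j)
        exact this.2
      exact forceGe _ (key g) hall
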